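/- Let ξ be a 2×2 complex symmetric matrix with det(ξ) = 0. Then for every real symmetric 2×2 matrix H, the trace Tr(ξ·H·ξ̄·H) is a real number and satisfies Tr(ξ·H·ξ̄·H) ≥ 0. -/
import Mathlib

private lemma keyC (a b c p q r : ℂ) (h : a * c = b * b)
    (h' : (starRingEnd ℂ) a * (starRingEnd ℂ) c = (starRingEnd ℂ) b * (starRingEnd ℂ) b) :
    (a * (starRingEnd ℂ) a + c * (starRingEnd ℂ) c) *
      (p * ((a*p + b*q) * (starRingEnd ℂ) a + (a*q + b*r) * (starRingEnd ℂ) b)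
       + q * ((a*p + b*q) * (starRingEnd ℂ) b + (a*q + b*r) * (starRingEnd ℂ) c)
       + q * ((b*p + c*q) * (starRingEnd ℂ) a + (b*q + c*r) * (starRingEnd ℂ) b)
       + r * ((b*p + c*q) * (starRingEnd ℂ) b + (b*q + c*r) * (starRingEnd ℂ) c)) =
    (p * (a * (starRingEnd ℂ) a) + q * (a * (starRingEnd ℂ) b + (starRingEnd ℂ) a * b)
       + r * (b * (starRingEnd ℂ) b))^2
    + (p * (b * (starRingEnd ℂ) b) + q * (b * (starRingEnd ℂ) c + (starRingEnd ℂ) b * c)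
       + r * (c * (starRingEnd ℂ) c))^2 := by
  linear_combination ((q * (starRingEnd ℂ) a + r * (starRingEnd ℂ) b)^2
      + (q * (starRingEnd ℂ) c + p * (starRingEnd ℂ) b)^2
      + (p^2 + r^2) * ((starRingEnd ℂ) a * (starRingEnd ℂ) c - (starRingEnd ℂ) b * (starRingEnd ℂ) b)) * h
    + ((q * a + r * b)^2 + (q * c + p * b)^2) * h'

/-- if `ξ` is a `2×2` complex symmetric matrix with `det ξ = 0`, then for
every real symmetric `2×2` matrix `H`, `Tr(ξ·H·ξ̄·H)` is real and nonnegative. -/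
theorem statement5 (ξ : Matrix (Fin 2) (Fin 2) ℂ) (hξsym : ξ.IsSymm) (hξdet : ξ.det = 0)
    (H : Matrix (Fin 2) (Fin 2) ℝ) (hHsym : H.IsSymm) :
    (Matrix.trace
        (ξ * H.map Complex.ofReal * ξ.map (starRingEnd ℂ) * H.map Complex.ofReal)).im = 0 ∧
    0 ≤ (Matrix.trace
        (ξ * H.map Complex.ofReal * ξ.map (starRingEnd ℂ) * H.map Complex.ofReal)).re := by
  have hb : ξ 1 0 = ξ 0 1 := by rw [← hξsym.apply]
  have hq : H 1 0 = H 0 1 := by rw [← hHsym.apply]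
  rw [Matrix.det_fin_two, hb] at hξdet
  set a := ξ 0 0 with ha
  set b := ξ 0 1 with hbb
  set c := ξ 1 1 with hc
  set p := H 0 0
  set q := H 0 1
  set r := H 1 1
  have hdet : a * c = b * b := by linear_combination hξdet
  set C := starRingEnd ℂ with hC
  set T : ℂ := (p : ℂ) * ((a*p + b*q) * C a + (a*q + b*r) * C b)
       + q * ((a*p + b*q) * C b + (a*q + b*r) * C c)
       + q * ((b*p + c*q) * C a + (b*q + c*r) * C b)
       + r * ((b*p + c*q) * C b + (b*q + c*r) * C c) with hT
  have hTr : Matrix.trace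
        (ξ * H.map Complex.ofReal * ξ.map (starRingEnd ℂ) * H.map Complex.ofReal) = T := by
    rw [hT]
    simp [Matrix.trace_fin_two, Matrix.mul_apply, Fin.sum_univ_two, Matrix.map_apply, hb, hq,
      ← ha, ← hbb, ← hc, hC]
    ring
  rw [hTr]
  -- T is self-conjugate, hence real
  have him : T.im = 0 := by
    have hconj : C T = T := by
      rw [hT, hC]
      simp only [map_add, map_mul, Complex.conj_conj, Complex.conj_ofReal]
      ring
    rw [hC] at hconj
    exact Complex.conj_eq_iff_im.mp hconj
  refine ⟨him, ?_⟩
  -- the real quantities S, S'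
  set Sc : ℂ := (p : ℂ) * (a * C a) + q * (a * C b + C a * b) + r * (b * C b) with hSc
  set Sc' : ℂ := (p : ℂ) * (b * C b) + q * (b * C c + C b * c) + r * (c * C c) with hSc'
  have hScim : Sc.im = 0 := by
    have : C Sc = Sc := by
      rw [hSc, hC]
      simp only [map_add, map_mul, Complex.conj_conj, Complex.conj_ofReal]
      ring
    rw [hC] at this
    exact Complex.conj_eq_iff_im.mp this
  have hScim' : Sc'.im = 0 := by
    have : C Sc' = Sc' := by
      rw [hSc', hC]
      simp only [map_add, map_mul, Complex.conj_conj, Complex.conj_ofReal]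
      ring
    rw [hC] at this
    exact Complex.conj_eq_iff_im.mp this
  have hdet' : C a * C c = C b * C b := by
    rw [hC, ← map_mul, ← map_mul, hdet]
  have key : (a * C a + c * C c) * T = Sc ^ 2 + Sc' ^ 2 := by
    rw [hT, hSc, hSc', hC]
    exact keyC a b c p q r hdet (by rw [hC] at hdet'; exact hdet')
  -- pass to real parts
  have hA : a * C a + c * C c = ((Complex.normSq a + Complex.normSq c : ℝ) : ℂ) := by
    rw [hC, Complex.mul_conj, Complex.mul_conj]
    push_cast
    ring
  rw [hA] at key
  have key' : (Complex.normSq a + Complex.normSq c) * T.re = Sc.re ^ 2 + Sc'.re ^ 2 := by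
    have := congrArg Complex.re key
    simpa [Complex.mul_re, Complex.add_re, him, hScim, hScim', sq, Complex.mul_im] using this
  rcases eq_or_lt_of_le (add_nonneg (Complex.normSq_nonneg a) (Complex.normSq_nonneg c)) with h0 | hpos
  · -- a = c = 0, hence b = 0, hence T = 0
    have h1 := Complex.normSq_nonneg a
    have h2 := Complex.normSq_nonneg c
    have ha0 : a = 0 := Complex.normSq_eq_zero.mp (by linarith)
    have hc0 : c = 0 := Complex.normSq_eq_zero.mp (by linarith)
    have hb0 : b = 0 := mul_self_eq_zero.mp (by rw [← hdet, ha0, zero_mul])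
    rw [hT, ha0, hb0, hc0]
    simp
  · nlinarith [sq_nonneg Sc.re, sq_nonneg Sc'.re, key']
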